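/- Fix N ≥ 1, constants α_a, β_a ∈ ℝ, continuously differentiable φ_{a,1}, φ_{a,2} : ℝ² → ℝ for a = 1,…,N, and continuously differentiable τ_{ab} : ℝ⁴ → ℝ for a ≠ b satisfying τ_{ab}(x,y,x',y') = −τ_{ba}(x',y',x,y). Define the skew-symmetric matrix-valued map π on ℝ^{3N} with coordinates (S_a, I_a, R_a)_{a=1}^N by π_{I_a R_a} = −α_a·I_a + β_a·S_a·I_a + φ_{a,2}(S_a,I_a), π_{S_a R_a} = −β_a·S_a·I_a + φ_{a,1}(S_a,I_a), π_{S_a I_a} = 0, π_{R_a R_b} = −τ_{ab}(S_a,I_a,S_b,I_b) for a ≠ b, and all other independent entries zero. Then π satisfies the Jacobi identity: for all x and all indices i,j,k, ∑_l (π_{l i}(x)·∂_l π_{j k}(x) + π_{l j}(x)·∂_l π_{k i}(x) + π_{l k}(x)·∂_l π_{i j}(x)) = 0. -/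

import Mathlib

/-- A pointwise skew-symmetric matrix-valued map `P : ℝⁿ → Matrix(n,n,ℝ)` satisfies the
Jacobi identity if for all `x` and indices `i j k`,
`∑ l, (P_{l i}(x)·∂_l P_{j k}(x) + P_{l j}(x)·∂_l P_{k i}(x) + P_{l k}(x)·∂_l P_{i j}(x)) = 0`. -/
def JacobiIdentity {n : Type*} [Fintype n] [DecidableEq n]
    (P : (n → ℝ) → Matrix n n ℝ) : Prop :=
  ∀ x : n → ℝ, ∀ i j k : n,
    ∑ l : n,
      (P x l i * fderiv ℝ (fun y => P y j k) x (Pi.single l 1) +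
        P x l j * fderiv ℝ (fun y => P y k i) x (Pi.single l 1) +
        P x l k * fderiv ℝ (fun y => P y i j) x (Pi.single l 1)) = 0

/-- The Poisson structure of `N` interacting generalized SIR populations, on `ℝ^{3N}` with
coordinates `(S_a, I_a, R_a) = (x (a,0), x (a,1), x (a,2))`:
`π_{S_a I_a} = 0`, `π_{S_a R_a} = −β_a·S_a·I_a + φ_{a,1}(S_a,I_a)`,
`π_{I_a R_a} = −α_a·I_a + β_a·S_a·I_a + φ_{a,2}(S_a,I_a)`,
`π_{R_a R_b} = −τ_{ab}(S_a,I_a,S_b,I_b)` for `a ≠ b`, all other independent entries zero. -/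
noncomputable def intSirPoisson (N : ℕ) (α β : Fin N → ℝ)
    (φ₁ φ₂ : Fin N → ℝ × ℝ → ℝ) (τ : Fin N → Fin N → ℝ × ℝ × ℝ × ℝ → ℝ)
    (x : Fin N × Fin 3 → ℝ) : Matrix (Fin N × Fin 3) (Fin N × Fin 3) ℝ :=
  fun p q =>
    if p.1 = q.1 then
      if p.2 = 0 ∧ q.2 = 2 then
        -β p.1 * x (p.1, 0) * x (p.1, 1) + φ₁ p.1 (x (p.1, 0), x (p.1, 1))
      else if p.2 = 2 ∧ q.2 = 0 then
        -(-β p.1 * x (p.1, 0) * x (p.1, 1) + φ₁ p.1 (x (p.1, 0), x (p.1, 1)))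
      else if p.2 = 1 ∧ q.2 = 2 then
        -α p.1 * x (p.1, 1) + β p.1 * x (p.1, 0) * x (p.1, 1) + φ₂ p.1 (x (p.1, 0), x (p.1, 1))
      else if p.2 = 2 ∧ q.2 = 1 then
        -(-α p.1 * x (p.1, 1) + β p.1 * x (p.1, 0) * x (p.1, 1) + φ₂ p.1 (x (p.1, 0), x (p.1, 1)))
      else 0
    else
      if p.2 = 2 ∧ q.2 = 2 then
        -τ p.1 q.1 (x (p.1, 0), x (p.1, 1), x (q.1, 0), x (q.1, 1))
      else 0


/-- If `F` depends only on coordinates in `S`, directional derivatives in directions outside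
`S` vanish (no differentiability hypothesis needed). -/
lemma sir_fderiv_single_zero {ι : Type*} [Fintype ι] [DecidableEq ι]
    (F : (ι → ℝ) → ℝ) (S : Set ι)
    (hF : ∀ y z : ι → ℝ, (∀ p ∈ S, y p = z p) → F y = F z)
    (l : ι) (hl : l ∉ S) (x : ι → ℝ) :
    fderiv ℝ F x (Pi.single l 1) = 0 := by
  classical
  by_cases hd : DifferentiableAt ℝ F x
  · set L : (ι → ℝ) →L[ℝ] (ι → ℝ) :=
      ContinuousLinearMap.pi (fun p => if p ∈ S then ContinuousLinearMap.proj p else 0)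
      with hLdef
    have hLapp : ∀ (v : ι → ℝ) (p : ι), L v p = if p ∈ S then v p else 0 := by
      intro v p
      simp only [hLdef, ContinuousLinearMap.pi_apply]
      split_ifs with h <;> simp
    have hA : HasFDerivAt (fun y : ι → ℝ => L y + (x - L x)) L x :=
      (L.hasFDerivAt).add_const _
    have hFA : (fun y => F (L y + (x - L x))) = F := by
      funext y
      apply hF
      intro p hp
      simp [hLapp, hp]
    have hAx : L x + (x - L x) = x := by abel
    have hcomp : HasFDerivAt (fun y => F (L y + (x - L x)))
        ((fderiv ℝ F x).comp L) x := by
      have hg : HasFDerivAt F (fderiv ℝ F x) ((fun y : ι → ℝ => L y + (x - L x)) x) := by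
        simpa [hAx] using hd.hasFDerivAt
      exact hg.comp x hA
    rw [hFA] at hcomp
    have key : fderiv ℝ F x = (fderiv ℝ F x).comp L := hcomp.fderiv
    have hL0 : L (Pi.single l 1) = 0 := by
      funext p
      rw [hLapp]
      split_ifs with h
      · exact Pi.single_eq_of_ne (fun hpl => hl (by rwa [hpl] at h)) 1
      · rfl
    conv_lhs => rw [key]
    simp [ContinuousLinearMap.comp_apply, hL0]
  · rw [fderiv_zero_of_not_differentiableAt hd]
    rfl

variable {N : ℕ} {α β : Fin N → ℝ} {φ₁ φ₂ : Fin N → ℝ × ℝ → ℝ}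
  {τ : Fin N → Fin N → ℝ × ℝ × ℝ × ℝ → ℝ}

lemma sir_dep (p q : Fin N × Fin 3) (y z : Fin N × Fin 3 → ℝ)
    (h0 : y (p.1, 0) = z (p.1, 0)) (h1 : y (p.1, 1) = z (p.1, 1))
    (h2 : y (q.1, 0) = z (q.1, 0)) (h3 : y (q.1, 1) = z (q.1, 1)) :
    intSirPoisson N α β φ₁ φ₂ τ y p q = intSirPoisson N α β φ₁ φ₂ τ z p q := by
  simp only [intSirPoisson, h0, h1, h2, h3]

lemma sir_dvan (x : Fin N × Fin 3 → ℝ) (p q l : Fin N × Fin 3)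
    (h0 : l ≠ (p.1, 0)) (h1 : l ≠ (p.1, 1)) (h2 : l ≠ (q.1, 0)) (h3 : l ≠ (q.1, 1)) :
    fderiv ℝ (fun y => intSirPoisson N α β φ₁ φ₂ τ y p q) x (Pi.single l 1) = 0 := by
  apply sir_fderiv_single_zero _
    ({(p.1, 0), (p.1, 1), (q.1, 0), (q.1, 1)} : Set (Fin N × Fin 3)) ?_ l ?_ x
  · intro y z h
    exact sir_dep p q y z (h _ (by simp)) (h _ (by simp)) (h _ (by simp)) (h _ (by simp))
  · simp [Set.mem_insert_iff, h0, h1, h2, h3]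

lemma sir_zero₁ (y : Fin N × Fin 3 → ℝ) (p q : Fin N × Fin 3)
    (hp : p.2 ≠ 2) (hq : q.2 ≠ 2) :
    intSirPoisson N α β φ₁ φ₂ τ y p q = 0 := by
  simp [intSirPoisson, hp, hq]

lemma sir_zero₂ (y : Fin N × Fin 3 → ℝ) (p q : Fin N × Fin 3)
    (hpq : p.1 ≠ q.1) (h : p.2 ≠ 2 ∨ q.2 ≠ 2) :
    intSirPoisson N α β φ₁ φ₂ τ y p q = 0 := by
  rcases h with h | h <;> simp [intSirPoisson, hpq, h]

lemma sir_diag (y : Fin N × Fin 3 → ℝ) (p : Fin N × Fin 3) :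
    intSirPoisson N α β φ₁ φ₂ τ y p p = 0 := by
  rcases p with ⟨a, s⟩
  fin_cases s <;> simp [intSirPoisson]

lemma sir_skew
    (hτskew : ∀ a b, a ≠ b → ∀ u v u' v' : ℝ, τ a b (u, v, u', v') = -τ b a (u', v', u, v))
    (y : Fin N × Fin 3 → ℝ) (p q : Fin N × Fin 3) :
    intSirPoisson N α β φ₁ φ₂ τ y q p = -intSirPoisson N α β φ₁ φ₂ τ y p q := by
  rcases p with ⟨a, s⟩; rcases q with ⟨b, t⟩
  by_cases hab : a = b
  · subst hab
    fin_cases s <;> fin_cases t <;> simp [intSirPoisson]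
  · have hba : b ≠ a := Ne.symm hab
    by_cases hs : s = 2 <;> by_cases ht : t = 2
    · simp [intSirPoisson, hab, hba, hs, ht, hτskew b a hba]
    all_goals simp [intSirPoisson, hab, hba, hs, ht]

lemma sir_Tvan (x : Fin N × Fin 3 → ℝ) (i j k : Fin N × Fin 3)
    (h : i.2 ≠ 2 ∨ (∀ y, intSirPoisson N α β φ₁ φ₂ τ y j k = 0) ∨ (i.1 ≠ j.1 ∧ i.1 ≠ k.1)) :
    ∑ l : Fin N × Fin 3, intSirPoisson N α β φ₁ φ₂ τ x l i *
      fderiv ℝ (fun y => intSirPoisson N α β φ₁ φ₂ τ y j k) x (Pi.single l 1) = 0 := by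
  refine Finset.sum_eq_zero fun l _ => ?_
  rcases h with h | h | ⟨h1, h2⟩
  · by_cases hl : l.2 = 2
    · have hz : fderiv ℝ (fun y => intSirPoisson N α β φ₁ φ₂ τ y j k) x (Pi.single l 1) = 0 := by
        apply sir_dvan x j k l
        all_goals (rintro rfl; simp at hl)
      rw [hz, mul_zero]
    · rw [sir_zero₁ x l i hl h, zero_mul]
  · have h0 : (fun y => intSirPoisson N α β φ₁ φ₂ τ y j k) = fun _ => 0 := funext h
    rw [h0]
    simp
  · by_cases hl : l.2 = 2
    · have hz : fderiv ℝ (fun y => intSirPoisson N α β φ₁ φ₂ τ y j k) x (Pi.single l 1) = 0 := by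
        apply sir_dvan x j k l
        all_goals (rintro rfl; simp at hl)
      rw [hz, mul_zero]
    · by_cases hd : l.1 = i.1
      · have hz : fderiv ℝ (fun y => intSirPoisson N α β φ₁ φ₂ τ y j k) x (Pi.single l 1) = 0 := by
          apply sir_dvan x j k l
          · rintro rfl; exact h1 hd.symm
          · rintro rfl; exact h1 hd.symm
          · rintro rfl; exact h2 hd.symm
          · rintro rfl; exact h2 hd.symm
        rw [hz, mul_zero]
      · rw [sir_zero₂ x l i hd (Or.inl hl), zero_mul]

lemma sir_Tneg
    (hτskew : ∀ a b, a ≠ b → ∀ u v u' v' : ℝ, τ a b (u, v, u', v') = -τ b a (u', v', u, v))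
    (x : Fin N × Fin 3 → ℝ) (i j k : Fin N × Fin 3) :
    ∑ l : Fin N × Fin 3, intSirPoisson N α β φ₁ φ₂ τ x l i *
      fderiv ℝ (fun y => intSirPoisson N α β φ₁ φ₂ τ y j k) x (Pi.single l 1)
    = -∑ l : Fin N × Fin 3, intSirPoisson N α β φ₁ φ₂ τ x l i *
      fderiv ℝ (fun y => intSirPoisson N α β φ₁ φ₂ τ y k j) x (Pi.single l 1) := by
  rw [← Finset.sum_neg_distrib]
  refine Finset.sum_congr rfl fun l _ => ?_
  have h0 : (fun y => intSirPoisson N α β φ₁ φ₂ τ y j k)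
      = fun y => -(intSirPoisson N α β φ₁ φ₂ τ y k j) :=
    funext fun y => sir_skew hτskew y k j
  rw [h0, fderiv_fun_neg]
  simp

lemma sir_keyDisj (p q r : Fin N × Fin 3) (hpq : p ≠ q) (hpr : p ≠ r) :
    p.2 ≠ 2 ∨ (∀ y, intSirPoisson N α β φ₁ φ₂ τ y q r = 0) ∨ (p.1 ≠ q.1 ∧ p.1 ≠ r.1) := by
  by_cases h2 : p.2 = 2
  swap
  · exact Or.inl h2
  by_cases hb : p.1 = q.1
  · have hq2 : q.2 ≠ 2 := fun h => hpq (Prod.ext hb (h2.trans h.symm))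
    refine Or.inr (Or.inl fun y => ?_)
    by_cases hqr : q.1 = r.1
    · have hr2 : r.2 ≠ 2 := fun h => hpr (Prod.ext (hb.trans hqr) (h2.trans h.symm))
      exact sir_zero₁ y q r hq2 hr2
    · exact sir_zero₂ y q r hqr (Or.inl hq2)
  · by_cases hc : p.1 = r.1
    · have hr2 : r.2 ≠ 2 := fun h => hpr (Prod.ext hc (h2.trans h.symm))
      refine Or.inr (Or.inl fun y => ?_)
      by_cases hqr : q.1 = r.1
      · exact absurd (hc.trans hqr.symm) hb
      · exact sir_zero₂ y q r hqr (Or.inr hr2)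
    · exact Or.inr (Or.inr ⟨hb, hc⟩)


theorem interactingSIR_poisson_jacobi (N : ℕ) (hN : 1 ≤ N) (α β : Fin N → ℝ)
    (φ₁ φ₂ : Fin N → ℝ × ℝ → ℝ) (τ : Fin N → Fin N → ℝ × ℝ × ℝ × ℝ → ℝ)
    (hφ₁ : ∀ a, ContDiff ℝ 1 (φ₁ a)) (hφ₂ : ∀ a, ContDiff ℝ 1 (φ₂ a))
    (hτ : ∀ a b, a ≠ b → ContDiff ℝ 1 (τ a b))
    (hτskew : ∀ a b, a ≠ b → ∀ u v u' v' : ℝ, τ a b (u, v, u', v') = -τ b a (u', v', u, v)) :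
    JacobiIdentity (intSirPoisson N α β φ₁ φ₂ τ) := by
  unfold JacobiIdentity
  intro x i j k
  rw [Finset.sum_add_distrib, Finset.sum_add_distrib]
  by_cases hij : i = j
  · subst hij
    rw [sir_Tvan x k i i (Or.inr (Or.inl fun y => sir_diag y i)), sir_Tneg hτskew x i k i]
    ring
  by_cases hjk : j = k
  · subst hjk
    rw [sir_Tvan x i j j (Or.inr (Or.inl fun y => sir_diag y j)), sir_Tneg hτskew x j j i]
    ring
  by_cases hik : i = k
  · subst hik
    rw [sir_Tvan x j i i (Or.inr (Or.inl fun y => sir_diag y i)), sir_Tneg hτskew x i j i]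
    ring
  rw [sir_Tvan x i j k (sir_keyDisj i j k hij hik),
    sir_Tvan x j k i (sir_keyDisj j k i hjk (Ne.symm hij)),
    sir_Tvan x k i j (sir_keyDisj k i j (Ne.symm hik) (Ne.symm hjk))]
  ring
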